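/- (Proposition 3, vertical variant: ULA-to-URA expansion.) Let N, M ≥ 1, let (u, v) be a Golay complementary pair of unimodular sequences of length N, and let w_PA, w_PB : {0,…,M−1} → ℂ be arbitrary sequences. Define 2N×M matrices W_A, W_B by: for 0 ≤ n ≤ N−1 and 0 ≤ m ≤ M−1, W_A(n,m) = u(n)·w_PA(m), W_A(N+n,m) = −v(n)·conj(w_PB(M−1−m)), W_B(n,m) = u(n)·w_PB(m), W_B(N+n,m) = v(n)·conj(w_PA(M−1−m)). Then for all ψ_y, ψ_z ∈ ℝ, |F_{W_A}(ψ_y,ψ_z)|² + |F_{W_B}(ψ_y,ψ_z)|² = 2N·( |F_{w_PA}(ψ_y)|² + |F_{w_PB}(ψ_y)|² ), where F_{w_PA}, F_{w_PB} denote one-dimensional array factors. -/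

import Mathlib

open Finset Complex


/-- The one-dimensional array factor of a length-`M` sequence `u` at spatial
frequency `ψ`: `F_u(ψ) = Σ_{m=0}^{M-1} u(m) · exp(i·m·ψ)`. -/
noncomputable def arrayFactor (M : ℕ) (u : ℕ → ℂ) (ψ : ℝ) : ℂ :=
  ∑ m ∈ Finset.range M, u m * Complex.exp (Complex.I * (m : ℂ) * (ψ : ℂ))

/-- The aperiodic autocorrelation of a length-`M` sequence `u` at shift `τ`:
`R_u(τ) = Σ_{m=0}^{M-1-τ} u(m) · conj(u(m+τ))`. -/
noncomputable def aacf (M : ℕ) (u : ℕ → ℂ) (τ : ℕ) : ℂ :=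
  ∑ m ∈ Finset.range (M - τ), u m * (starRingEnd ℂ) (u (m + τ))

/-- The two-dimensional array factor of an `N×M` matrix `W` at `(ψ_y, ψ_z)`:
`F_W(ψ_y,ψ_z) = Σ_{n=0}^{N-1} Σ_{m=0}^{M-1} W(n,m) · exp(i·(n·ψ_z + m·ψ_y))`. -/
noncomputable def arrayFactor2 (N M : ℕ) (W : ℕ → ℕ → ℂ) (ψy ψz : ℝ) : ℂ :=
  ∑ n ∈ Finset.range N, ∑ m ∈ Finset.range M,
    W n m * Complex.exp (Complex.I * ((n : ℂ) * (ψz : ℂ) + (m : ℂ) * (ψy : ℂ)))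

/-- The two-dimensional aperiodic autocorrelation of an `N×M` matrix `W` at integer
shifts `(τ_n, τ_m)`: the sum of `W(n,m)·conj(W(n+τ_n, m+τ_m))` over all pairs
`(n,m)` with `0 ≤ n, n+τ_n ≤ N−1` and `0 ≤ m, m+τ_m ≤ M−1`. -/
noncomputable def aacf2 (N M : ℕ) (W : ℕ → ℕ → ℂ) (τn τm : ℤ) : ℂ :=
  ∑ n ∈ Finset.range N, ∑ m ∈ Finset.range M,
    if 0 ≤ (n : ℤ) + τn ∧ (n : ℤ) + τn < (N : ℤ) ∧
        0 ≤ (m : ℤ) + τm ∧ (m : ℤ) + τm < (M : ℤ) then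
      W n m * (starRingEnd ℂ) (W ((n : ℤ) + τn).toNat ((m : ℤ) + τm).toNat)
    else 0

/-- `(U, V)` is a Golay complementary array pair of `N×M` matrices: the sum of their
two-dimensional aperiodic autocorrelations vanishes at every nonzero shift. -/
def IsGolayArrayPair (N M : ℕ) (U V : ℕ → ℕ → ℂ) : Prop :=
  ∀ τn τm : ℤ, |τn| ≤ (N : ℤ) - 1 → |τm| ≤ (M : ℤ) - 1 → ¬(τn = 0 ∧ τm = 0) →
    aacf2 N M U τn τm + aacf2 N M V τn τm = 0

lemma tri_lower (N : ℕ) (f : ℕ → ℕ → ℂ)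
    (h : ∀ τ, 1 ≤ τ → τ < N → ∑ m ∈ range (N - τ), f (m + τ) m = 0) :
    ∑ n ∈ range N, ∑ k ∈ range n, f n k = 0 := by
  rw [← Finset.sum_sigma (f := fun (p : Σ _ : ℕ, ℕ) => f p.1 p.2)]
  have := Finset.sum_nbij' (s := (range N).sigma fun n => range n)
    (t := (Finset.Ico 1 N).sigma fun τ => range (N - τ))
    (i := fun p => ⟨p.1 - p.2, p.2⟩) (j := fun q => ⟨q.2 + q.1, q.2⟩)
    (f := fun p => f p.1 p.2) (g := fun q => f (q.2 + q.1) q.2)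
    ?_ ?_ ?_ ?_ ?_
  · rw [this, Finset.sum_sigma]
    exact Finset.sum_eq_zero fun τ hτ => by
      simp only [Finset.mem_Ico] at hτ; exact h τ hτ.1 hτ.2
  · rintro ⟨n, k⟩ hp
    simp only [Finset.mem_sigma, Finset.mem_range, Finset.mem_Ico] at *; omega
  · rintro ⟨τ, m⟩ hq
    simp only [Finset.mem_sigma, Finset.mem_range, Finset.mem_Ico] at *; omega
  · rintro ⟨n, k⟩ hp
    simp only [Finset.mem_sigma, Finset.mem_range] at hp
    simp only [Sigma.mk.inj_iff]; constructor <;> [omega; rfl]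
  · rintro ⟨τ, m⟩ hq
    simp only [Finset.mem_sigma, Finset.mem_range, Finset.mem_Ico] at hq
    simp only [Sigma.mk.inj_iff]; constructor <;> [omega; rfl]
  · rintro ⟨n, k⟩ hp
    simp only [Finset.mem_sigma, Finset.mem_range] at hp
    simp only []; congr 1; omega

lemma tri_upper (N : ℕ) (f : ℕ → ℕ → ℂ)
    (h : ∀ τ, 1 ≤ τ → τ < N → ∑ m ∈ range (N - τ), f m (m + τ) = 0) :
    ∑ n ∈ range N, ∑ k ∈ Finset.Ico (n + 1) N, f n k = 0 := by
  rw [← Finset.sum_sigma (f := fun (p : Σ _ : ℕ, ℕ) => f p.1 p.2)]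
  have := Finset.sum_nbij' (s := (range N).sigma fun n => Finset.Ico (n + 1) N)
    (t := (Finset.Ico 1 N).sigma fun τ => range (N - τ))
    (i := fun p => ⟨p.2 - p.1, p.1⟩) (j := fun q => ⟨q.2, q.2 + q.1⟩)
    (f := fun p => f p.1 p.2) (g := fun q => f q.2 (q.2 + q.1))
    ?_ ?_ ?_ ?_ ?_
  · rw [this, Finset.sum_sigma]
    exact Finset.sum_eq_zero fun τ hτ => by
      simp only [Finset.mem_Ico] at hτ; exact h τ hτ.1 hτ.2
  · rintro ⟨n, k⟩ hp
    simp only [Finset.mem_sigma, Finset.mem_range, Finset.mem_Ico] at *; omega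
  · rintro ⟨τ, m⟩ hq
    simp only [Finset.mem_sigma, Finset.mem_range, Finset.mem_Ico] at *; omega
  · rintro ⟨n, k⟩ hp
    simp only [Finset.mem_sigma, Finset.mem_range, Finset.mem_Ico] at hp
    have hk : n + (k - n) = k := by omega
    simp only [hk]
  · rintro ⟨τ, m⟩ hq
    simp only [Finset.mem_sigma, Finset.mem_range, Finset.mem_Ico] at hq
    simp only [Sigma.mk.inj_iff]; constructor <;> [omega; rfl]
  · rintro ⟨n, k⟩ hp
    simp only [Finset.mem_sigma, Finset.mem_range, Finset.mem_Ico] at hp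
    simp only []; congr 1; omega

lemma golay_power (N : ℕ) (u v : ℕ → ℂ)
    (hu : ∀ n < N, ‖u n‖ = 1) (hv : ∀ n < N, ‖v n‖ = 1)
    (hGolay : ∀ τ, 1 ≤ τ → τ < N → aacf N u τ + aacf N v τ = 0) (ψ : ℝ) :
    Complex.normSq (arrayFactor N u ψ) + Complex.normSq (arrayFactor N v ψ)
      = 2 * N := by
  set e : ℕ → ℂ := fun n => Complex.exp (Complex.I * (n : ℂ) * (ψ : ℂ)) with he
  have hmul : ∀ a b : ℕ, e (a + b) = e a * e b := by
    intro a b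
    simp only [he, ← Complex.exp_add]
    congr 1
    push_cast
    ring
  have hone : ∀ n : ℕ, e n * (starRingEnd ℂ) (e n) = 1 := by
    intro n
    rw [Complex.mul_conj]
    norm_cast
    rw [← Complex.sq_norm]
    have : ‖e n‖ = 1 := by
      have : (Complex.I * (n : ℂ) * (ψ : ℂ)) = ((n * ψ : ℝ) : ℂ) * Complex.I := by
        push_cast; ring
      rw [he]; simp only [this, Complex.norm_exp_ofReal_mul_I]
    rw [this]; norm_num
  set g : ℕ → ℕ → ℂ := fun n k =>
      (u n * (starRingEnd ℂ) (u k) + v n * (starRingEnd ℂ) (v k)) *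
        (e n * (starRingEnd ℂ) (e k)) with hg
  have expand : ((Complex.normSq (arrayFactor N u ψ) : ℂ) +
      (Complex.normSq (arrayFactor N v ψ) : ℂ)) =
      ∑ n ∈ range N, ∑ k ∈ range N, g n k := by
    rw [← Complex.mul_conj, ← Complex.mul_conj]
    unfold arrayFactor
    rw [map_sum, map_sum, Finset.sum_mul_sum, Finset.sum_mul_sum,
      ← Finset.sum_add_distrib]
    refine Finset.sum_congr rfl fun n _ => ?_
    rw [← Finset.sum_add_distrib]
    refine Finset.sum_congr rfl fun k _ => ?_
    simp only [hg, map_mul, he]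
    ring
  have split : ∑ n ∈ range N, ∑ k ∈ range N, g n k =
      (∑ n ∈ range N, g n n) + (∑ n ∈ range N, ∑ k ∈ range n, g n k) +
      (∑ n ∈ range N, ∑ k ∈ Finset.Ico (n + 1) N, g n k) := by
    rw [← Finset.sum_add_distrib, ← Finset.sum_add_distrib]
    refine Finset.sum_congr rfl fun n hn => ?_
    rw [Finset.mem_range] at hn
    rw [Finset.range_eq_Ico,
      ← Finset.sum_Ico_consecutive (fun k => g n k) (Nat.zero_le (n + 1))
        (by omega : n + 1 ≤ N), ← Finset.range_eq_Ico, Finset.sum_range_succ]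
    ring
  have diag : ∑ n ∈ range N, g n n = 2 * N := by
    have hdg : ∀ n ∈ range N, g n n = 2 := by
      intro n hn
      rw [Finset.mem_range] at hn
      have h1 : u n * (starRingEnd ℂ) (u n) = 1 := by
        rw [Complex.mul_conj]; norm_cast
        rw [← Complex.sq_norm, hu n hn]; norm_num
      have h2 : v n * (starRingEnd ℂ) (v n) = 1 := by
        rw [Complex.mul_conj]; norm_cast
        rw [← Complex.sq_norm, hv n hn]; norm_num
      calc g n n = (u n * (starRingEnd ℂ) (u n) + v n * (starRingEnd ℂ) (v n)) *
            (e n * (starRingEnd ℂ) (e n)) := rfl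
        _ = 2 := by rw [h1, h2, hone n]; norm_num
    rw [Finset.sum_congr rfl hdg, Finset.sum_const, Finset.card_range,
      nsmul_eq_mul]
    ring
  have lower : ∑ n ∈ range N, ∑ k ∈ range n, g n k = 0 := by
    apply tri_lower
    intro τ h1 h2
    have key : ∀ m : ℕ, g (m + τ) m =
        (starRingEnd ℂ) (u m * (starRingEnd ℂ) (u (m + τ)) +
          v m * (starRingEnd ℂ) (v (m + τ))) * e τ := by
      intro m
      have h1 : e (m + τ) * (starRingEnd ℂ) (e m) = e τ := by
        rw [hmul]; linear_combination e τ * hone m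
      calc g (m + τ) m = (u (m + τ) * (starRingEnd ℂ) (u m) +
            v (m + τ) * (starRingEnd ℂ) (v m)) *
            (e (m + τ) * (starRingEnd ℂ) (e m)) := rfl
        _ = _ := by
            rw [h1]
            simp only [map_add, map_mul, Complex.conj_conj]
            ring
    calc ∑ m ∈ range (N - τ), g (m + τ) m
        = (starRingEnd ℂ) (aacf N u τ + aacf N v τ) * e τ := by
          rw [Finset.sum_congr rfl fun m _ => key m, ← Finset.sum_mul]
          congr 1
          rw [aacf, aacf, ← Finset.sum_add_distrib, map_sum]
      _ = 0 := by rw [hGolay τ h1 h2]; simp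
  have upper : ∑ n ∈ range N, ∑ k ∈ Finset.Ico (n + 1) N, g n k = 0 := by
    apply tri_upper
    intro τ h1 h2
    have key : ∀ m : ℕ, g m (m + τ) =
        (u m * (starRingEnd ℂ) (u (m + τ)) + v m * (starRingEnd ℂ) (v (m + τ))) *
          (starRingEnd ℂ) (e τ) := by
      intro m
      have h2 : e m * (starRingEnd ℂ) (e (m + τ)) = (starRingEnd ℂ) (e τ) := by
        rw [hmul, map_mul]; linear_combination (starRingEnd ℂ) (e τ) * hone m
      calc g m (m + τ) = (u m * (starRingEnd ℂ) (u (m + τ)) +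
            v m * (starRingEnd ℂ) (v (m + τ))) *
            (e m * (starRingEnd ℂ) (e (m + τ))) := rfl
        _ = _ := by rw [h2]
    calc ∑ m ∈ range (N - τ), g m (m + τ)
        = (aacf N u τ + aacf N v τ) * (starRingEnd ℂ) (e τ) := by
          rw [Finset.sum_congr rfl fun m _ => key m, ← Finset.sum_mul]
          congr 1
          rw [aacf, aacf, ← Finset.sum_add_distrib]
      _ = 0 := by rw [hGolay τ h1 h2]; simp
  have : ((Complex.normSq (arrayFactor N u ψ) : ℂ) +
      (Complex.normSq (arrayFactor N v ψ) : ℂ)) = 2 * N := by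
    rw [expand, split, diag, lower, upper]; ring
  exact_mod_cast this

lemma factorize (N M : ℕ) (hM : 1 ≤ M) (p q wP wQ : ℕ → ℂ) (W : ℕ → ℕ → ℂ) (ε : ℂ)
    (h1 : ∀ n < N, ∀ m < M, W n m = p n * wP m)
    (h2 : ∀ n < N, ∀ m < M,
      W (N + n) m = ε * (q n * (starRingEnd ℂ) (wQ (M - 1 - m))))
    (ψy ψz : ℝ) :
    arrayFactor2 (2 * N) M W ψy ψz =
      arrayFactor N p ψz * arrayFactor M wP ψy +
      ε * Complex.exp (Complex.I * (N : ℂ) * (ψz : ℂ)) *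
        Complex.exp (Complex.I * ((M : ℂ) - 1) * (ψy : ℂ)) *
        arrayFactor N q ψz * (starRingEnd ℂ) (arrayFactor M wQ ψy) := by
  unfold arrayFactor2
  rw [two_mul, Finset.sum_range_add]
  congr 1
  · -- first block
    rw [arrayFactor, arrayFactor, Finset.sum_mul_sum]
    refine Finset.sum_congr rfl fun n hn => Finset.sum_congr rfl fun m hm => ?_
    rw [Finset.mem_range] at hn hm
    rw [h1 n hn m hm, show Complex.I * ((n : ℂ) * (ψz : ℂ) + (m : ℂ) * (ψy : ℂ)) =
      Complex.I * (n : ℂ) * (ψz : ℂ) + Complex.I * (m : ℂ) * (ψy : ℂ) by ring,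
      Complex.exp_add]
    ring
  · -- second block
    have inner : ∀ n < N, ∑ m ∈ range M,
        W (N + n) m * Complex.exp (Complex.I * (((N + n : ℕ) : ℂ) * (ψz : ℂ) +
          (m : ℂ) * (ψy : ℂ))) =
        ε * Complex.exp (Complex.I * (N : ℂ) * (ψz : ℂ)) *
          (q n * Complex.exp (Complex.I * (n : ℂ) * (ψz : ℂ))) *
          (∑ m ∈ range M, (starRingEnd ℂ) (wQ (M - 1 - m)) *
            Complex.exp (Complex.I * (m : ℂ) * (ψy : ℂ))) := by
      intro n hn
      rw [Finset.mul_sum]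
      refine Finset.sum_congr rfl fun m hm => ?_
      rw [Finset.mem_range] at hm
      rw [h2 n hn m hm]
      rw [show ((N + n : ℕ) : ℂ) = (N : ℂ) + n by push_cast; ring]
      rw [show Complex.I * (((N : ℂ) + n) * (ψz : ℂ) + (m : ℂ) * (ψy : ℂ)) =
        Complex.I * (N : ℂ) * (ψz : ℂ) + (Complex.I * (n : ℂ) * (ψz : ℂ) +
          Complex.I * (m : ℂ) * (ψy : ℂ)) by ring, Complex.exp_add, Complex.exp_add]
      ring
    have rev : ∑ m ∈ range M, (starRingEnd ℂ) (wQ (M - 1 - m)) *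
        Complex.exp (Complex.I * (m : ℂ) * (ψy : ℂ)) =
        Complex.exp (Complex.I * ((M : ℂ) - 1) * (ψy : ℂ)) *
          (starRingEnd ℂ) (arrayFactor M wQ ψy) := by
      rw [← Finset.sum_range_reflect]
      rw [arrayFactor, map_sum, Finset.mul_sum]
      refine Finset.sum_congr rfl fun m hm => ?_
      rw [Finset.mem_range] at hm
      have hsub : M - 1 - (M - 1 - m) = m := by omega
      rw [hsub]
      have hcast : ((M - 1 - m : ℕ) : ℂ) = (M : ℂ) - 1 - m := by
        have : (M - 1 - m : ℕ) = M - (1 + m) := by omega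
        rw [this, Nat.cast_sub (by omega)]
        push_cast; ring
      rw [hcast, map_mul]
      have hconj : (starRingEnd ℂ) (Complex.exp (Complex.I * (m : ℂ) * (ψy : ℂ))) =
          Complex.exp (-(Complex.I * (m : ℂ) * (ψy : ℂ))) := by
        rw [← Complex.exp_conj]
        congr 1
        simp [Complex.conj_I]
        try ring
      rw [hconj, show Complex.I * ((M : ℂ) - 1 - m) * (ψy : ℂ) =
        Complex.I * ((M : ℂ) - 1) * (ψy : ℂ) + -(Complex.I * (m : ℂ) * (ψy : ℂ)) by ring,
        Complex.exp_add]
      ring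
    rw [Finset.sum_congr rfl fun n hn => inner n (Finset.mem_range.mp hn), rev]
    simp only [arrayFactor, Finset.sum_mul, Finset.mul_sum]
    refine Finset.sum_congr rfl fun n _ => ?_
    ring

/-- Proposition 3, vertical variant: expanding a one-dimensional protoarray by a
Golay complementary pair of expanders stacked vertically yields a rectangular array
whose sum power pattern is `2N` times that of the protoarray. -/
theorem ula_to_ura_expansion_vertical (N M : ℕ) (hN : 1 ≤ N) (hM : 1 ≤ M)
    (u v wPA wPB : ℕ → ℂ) (WA WB : ℕ → ℕ → ℂ)
    (hu : ∀ n < N, ‖u n‖ = 1) (hv : ∀ n < N, ‖v n‖ = 1)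
    (hGolay : ∀ τ, 1 ≤ τ → τ < N → aacf N u τ + aacf N v τ = 0)
    (hA1 : ∀ n < N, ∀ m < M, WA n m = u n * wPA m)
    (hA2 : ∀ n < N, ∀ m < M,
      WA (N + n) m = -(v n * (starRingEnd ℂ) (wPB (M - 1 - m))))
    (hB1 : ∀ n < N, ∀ m < M, WB n m = u n * wPB m)
    (hB2 : ∀ n < N, ∀ m < M,
      WB (N + n) m = v n * (starRingEnd ℂ) (wPA (M - 1 - m)))
    (ψy ψz : ℝ) :
    ‖arrayFactor2 (2 * N) M WA ψy ψz‖ ^ 2 +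
        ‖arrayFactor2 (2 * N) M WB ψy ψz‖ ^ 2 =
      2 * N * (‖arrayFactor M wPA ψy‖ ^ 2 +
                ‖arrayFactor M wPB ψy‖ ^ 2) := by
  have hFA := factorize N M hM u v wPA wPB WA (-1) hA1
    (fun n hn m hm => by rw [hA2 n hn m hm]; ring) ψy ψz
  have hFB := factorize N M hM u v wPB wPA WB 1 hB1
    (fun n hn m hm => by rw [hB2 n hn m hm]; ring) ψy ψz
  set P := arrayFactor N u ψz with hP
  set Q := arrayFactor N v ψz with hQ
  set A := arrayFactor M wPA ψy with hA
  set B := arrayFactor M wPB ψy with hB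
  set cz := Complex.exp (Complex.I * (N : ℂ) * (ψz : ℂ)) with hcz
  set cy := Complex.exp (Complex.I * ((M : ℂ) - 1) * (ψy : ℂ)) with hcy
  have hnc : Complex.normSq (cz * cy) = 1 := by
    rw [Complex.normSq_mul]
    have h1 : ‖cz‖ = 1 := by
      rw [hcz, show Complex.I * (N : ℂ) * (ψz : ℂ) =
        (((N : ℝ) * ψz : ℝ) : ℂ) * Complex.I by push_cast; ring,
        Complex.norm_exp_ofReal_mul_I]
    have h2 : ‖cy‖ = 1 := by
      rw [hcy, show Complex.I * ((M : ℂ) - 1) * (ψy : ℂ) =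
        ((((M : ℝ) - 1) * ψy : ℝ) : ℂ) * Complex.I by push_cast; ring,
        Complex.norm_exp_ofReal_mul_I]
    rw [Complex.normSq_eq_norm_sq, Complex.normSq_eq_norm_sq, h1, h2]
    norm_num
  have hFA' : arrayFactor2 (2 * N) M WA ψy ψz =
      P * A - (cz * cy) * (Q * (starRingEnd ℂ) B) := by rw [hFA]; ring
  have hFB' : arrayFactor2 (2 * N) M WB ψy ψz =
      P * B + (cz * cy) * (Q * (starRingEnd ℂ) A) := by rw [hFB]; ring
  have hPQ : Complex.normSq P + Complex.normSq Q = 2 * N :=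
    golay_power N u v hu hv hGolay ψz
  rw [hFA', hFB', Complex.sq_norm, Complex.sq_norm, Complex.sq_norm, Complex.sq_norm,
    Complex.normSq_sub, Complex.normSq_add]
  have hcross : P * A * (starRingEnd ℂ) ((cz * cy) * (Q * (starRingEnd ℂ) B)) =
      P * B * (starRingEnd ℂ) ((cz * cy) * (Q * (starRingEnd ℂ) A)) := by
    simp only [map_mul, Complex.conj_conj]
    ring
  rw [hcross]
  simp only [Complex.normSq_mul, Complex.normSq_conj]
  rw [Complex.normSq_mul] at hnc
  linear_combination (Complex.normSq A + Complex.normSq B) * hPQ +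
    (Complex.normSq Q * (Complex.normSq A + Complex.normSq B)) * hnc
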